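/- Let T > 0, ε₀ ∈ (0,1), c > 0, and set k₀ = ⌊4/ε₀⌋ + 1. Let F : [0,T] → [0,∞) be integrable and let Σ₁ ⊆ [0,T] be a measurable set with Lebesgue measure |Σ₁| = ε₀ T such that F(t) ≥ c for all t ∈ Σ₁. Then for every τ with 0 < τ < ε₀T/2 there exists t₀ ∈ Σ₁ with t₀ + τ ≤ T such that (1/τ) ∫_{t₀}^{t₀+τ} F(t) dt ≥ 2c/k₀. -/

import Mathlib

open MeasureTheory Real Filter

/-- the time-interval pigeonhole claim.  If `F ≥ 0` is integrable on `[0,T]`,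
`S₁ ⊆ [0,T]` has measure `ε₀ T` and `F ≥ c` on `S₁`, then for every `0 < τ < ε₀T/2`
there is `t₀ ∈ S₁` with `t₀ + τ ≤ T` on whose right `τ`-window the average of `F`
is at least `2c/k₀`, where `k₀ = ⌊4/ε₀⌋ + 1`. -/
theorem pigeonhole_time_window
    (T ε₀ c : ℝ) (hT : 0 < T) (hε₀ : 0 < ε₀) (hε₀' : ε₀ < 1) (hc : 0 < c)
    (k₀ : ℕ) (hk₀ : k₀ = ⌊(4 : ℝ) / ε₀⌋₊ + 1)
    (F : ℝ → ℝ) (hFpos : ∀ t, 0 ≤ F t) (hFint : MeasureTheory.IntegrableOn F (Set.Icc 0 T))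
    (S₁ : Set ℝ) (hmeas : MeasurableSet S₁) (hsub : S₁ ⊆ Set.Icc 0 T)
    (hvol : (MeasureTheory.volume S₁).toReal = ε₀ * T)
    (hlow : ∀ t ∈ S₁, c ≤ F t)
    (τ : ℝ) (hτ0 : 0 < τ) (hτ : τ < ε₀ * T / 2) :
    ∃ t₀ ∈ S₁, t₀ + τ ≤ T ∧
      2 * c / (k₀ : ℝ) ≤ (1 / τ) * ∫ t in Set.Icc t₀ (t₀ + τ), F t := by
  have hτT : τ < T := by nlinarith
  have hTτpos : 0 < T - τ := by linarith
  -- k₀ facts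
  have hk₀pos : 0 < (k₀ : ℝ) := by
    rw [hk₀]; positivity
  have hk4 : 4 < ε₀ * k₀ := by
    have h1 : (4 : ℝ) / ε₀ < k₀ := by
      rw [hk₀]; push_cast; exact Nat.lt_floor_add_one _
    rw [div_lt_iff₀ hε₀] at h1
    nlinarith
  -- the number of subintervals
  set K : ℕ := ⌈(T - τ) / τ⌉₊ with hKdef
  have hKpos : 0 < K := Nat.ceil_pos.2 (by positivity)
  have hKposR : (0 : ℝ) < K := by exact_mod_cast hKpos
  have hKge : (T - τ) / τ ≤ K := Nat.le_ceil _
  have hKτ : (K : ℝ) * τ < T := by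
    have := Nat.ceil_lt_add_one (a := (T - τ) / τ) (by positivity)
    have h2 : (K : ℝ) < T / τ := by
      rw [hKdef]
      calc ((⌈(T - τ) / τ⌉₊ : ℝ)) < (T - τ) / τ + 1 := this
        _ = T / τ := by field_simp; ring
    calc (K : ℝ) * τ < T / τ * τ := by exact mul_lt_mul_of_pos_right h2 hτ0
      _ = T := by field_simp
  -- the subinterval length
  set ℓ : ℝ := (T - τ) / K with hℓdef
  have hℓpos : 0 < ℓ := by positivity
  have hℓτ : ℓ ≤ τ := by
    rw [hℓdef, div_le_iff₀ hKposR]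
    calc T - τ = (T - τ) / τ * τ := by field_simp
      _ ≤ (K : ℝ) * τ := mul_le_mul_of_nonneg_right hKge hτ0.le
      _ = τ * K := by ring
  have hKℓ : (K : ℝ) * ℓ = T - τ := by
    rw [hℓdef]; field_simp
  -- finiteness helper
  have hfin : ∀ s : Set ℝ, s ⊆ Set.Icc 0 T → volume s ≠ ⊤ := by
    intro s hs
    exact ne_of_lt (lt_of_le_of_lt (measure_mono hs)
      (by rw [Real.volume_Icc]; exact ENNReal.ofReal_lt_top))
  -- the truncated set
  set A : Set ℝ := S₁ ∩ Set.Icc 0 (T - τ) with hAdef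
  have hAsub : A ⊆ S₁ := Set.inter_subset_left
  have hAsubT : A ⊆ Set.Icc 0 T := hAsub.trans hsub
  have hAmeas : MeasurableSet A := hmeas.inter measurableSet_Icc
  have hAvol : ε₀ * T - τ ≤ (volume A).toReal := by
    have hcov : S₁ ⊆ A ∪ Set.Ioc (T - τ) T := by
      intro x hx
      rcases le_or_gt x (T - τ) with h | h
      · exact Or.inl ⟨hx, (hsub hx).1, h⟩
      · exact Or.inr ⟨h, (hsub hx).2⟩
    have h1 : volume S₁ ≤ volume A + ENNReal.ofReal τ := by
      calc volume S₁ ≤ volume (A ∪ Set.Ioc (T - τ) T) := measure_mono hcov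
        _ ≤ volume A + volume (Set.Ioc (T - τ) T) := measure_union_le _ _
        _ = volume A + ENNReal.ofReal τ := by rw [Real.volume_Ioc]; ring_nf
    have h2 : (volume S₁).toReal ≤ (volume A).toReal + τ := by
      have hne : volume A + ENNReal.ofReal τ ≠ ⊤ :=
        ENNReal.add_ne_top.2 ⟨hfin A hAsubT, ENNReal.ofReal_ne_top⟩
      have := ENNReal.toReal_mono hne h1
      rwa [ENNReal.toReal_add (hfin A hAsubT) ENNReal.ofReal_ne_top,
        ENNReal.toReal_ofReal hτ0.le] at this
    rw [hvol] at h2; linarith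
  -- the subintervals
  set I : ℕ → Set ℝ := fun j => Set.Icc (j * ℓ) ((j + 1) * ℓ) with hIdef
  -- coverage
  have hcover : A ⊆ ⋃ j ∈ Finset.range K, A ∩ I j := by
    intro x hx
    have hx0 : 0 ≤ x := hx.2.1
    have hxK : x ≤ (K : ℝ) * ℓ := by rw [hKℓ]; exact hx.2.2
    have hxl : 0 ≤ x / ℓ := by positivity
    by_cases hcase : ⌊x / ℓ⌋₊ < K
    · refine Set.mem_biUnion (Finset.mem_range.2 hcase) ⟨hx, ?_, ?_⟩
      · calc (⌊x / ℓ⌋₊ : ℝ) * ℓ ≤ x / ℓ * ℓ :=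
            mul_le_mul_of_nonneg_right (Nat.floor_le hxl) hℓpos.le
          _ = x := by field_simp
      · have := (Nat.lt_floor_add_one (x / ℓ)).le
        calc x = x / ℓ * ℓ := by field_simp
          _ ≤ ((⌊x / ℓ⌋₊ : ℝ) + 1) * ℓ := by
              apply mul_le_mul_of_nonneg_right _ hℓpos.le
              push_cast
              exact this
          _ = _ := by push_cast; ring
    · push_neg at hcase
      have hKx : (K : ℝ) ≤ x / ℓ := le_trans (by exact_mod_cast hcase) (Nat.floor_le hxl)
      have hxeq : x = (K : ℝ) * ℓ := le_antisymm hxK (by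
        calc (K : ℝ) * ℓ ≤ x / ℓ * ℓ := mul_le_mul_of_nonneg_right hKx hℓpos.le
          _ = x := by field_simp)
      have hK1 : K - 1 < K := Nat.sub_lt hKpos one_pos
      refine Set.mem_biUnion (Finset.mem_range.2 hK1) ⟨hx, ?_, ?_⟩
      · rw [hxeq]
        apply mul_le_mul_of_nonneg_right _ hℓpos.le
        exact_mod_cast Nat.sub_le K 1
      · rw [hxeq]
        apply mul_le_mul_of_nonneg_right _ hℓpos.le
        have : (K - 1 : ℕ) + 1 = K := Nat.succ_pred_eq_of_pos hKpos
        exact_mod_cast this.ge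
  -- pigeonhole
  have hsum : (volume A).toReal ≤ ∑ j ∈ Finset.range K, (volume (A ∩ I j)).toReal := by
    have h1 : volume A ≤ ∑ j ∈ Finset.range K, volume (A ∩ I j) :=
      le_trans (measure_mono hcover) (measure_biUnion_finset_le _ _)
    have h2 : (∑ j ∈ Finset.range K, volume (A ∩ I j)).toReal
        = ∑ j ∈ Finset.range K, (volume (A ∩ I j)).toReal := by
      apply ENNReal.toReal_sum
      intro j _
      exact hfin _ ((Set.inter_subset_left).trans hAsubT)
    have hne : (∑ j ∈ Finset.range K, volume (A ∩ I j)) ≠ ⊤ := by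
      rw [← lt_top_iff_ne_top]
      apply ENNReal.sum_lt_top.2
      intro j _
      exact lt_top_iff_ne_top.2 (hfin _ ((Set.inter_subset_left).trans hAsubT))
    have := ENNReal.toReal_mono hne h1
    rwa [h2] at this
  have hpigeon : ∃ j ∈ Finset.range K,
      (volume A).toReal / K ≤ (volume (A ∩ I j)).toReal := by
    apply Finset.exists_le_of_sum_le ⟨0, Finset.mem_range.2 hKpos⟩
    rw [Finset.sum_const, Finset.card_range, nsmul_eq_mul]
    rw [mul_div_cancel₀ _ (ne_of_gt hKposR)]
    exact hsum
  obtain ⟨j, hjK, hjvol⟩ := hpigeon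
  set B : Set ℝ := A ∩ I j with hBdef
  have hBsubA : B ⊆ A := Set.inter_subset_left
  have hBsubI : B ⊆ I j := Set.inter_subset_right
  have hBsubT : B ⊆ Set.Icc 0 T := hBsubA.trans hAsubT
  have hBmeas : MeasurableSet B := hAmeas.inter measurableSet_Icc
  set m : ℝ := (volume B).toReal with hmdef
  -- the key quantitative bound
  have hm : 2 * τ / k₀ < m := by
    have h1 : (ε₀ * T - τ) / K ≤ m := by
      refine le_trans ?_ hjvol
      gcongr
    refine lt_of_lt_of_le ?_ h1
    rw [div_lt_div_iff₀ hk₀pos hKposR]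
    nlinarith [mul_pos hT hk₀pos, mul_pos (show (0:ℝ) < ε₀ * T - 2 * τ by linarith) hk₀pos]
  have hmpos : 0 < m := lt_trans (by positivity) hm
  -- B is nonempty; pick t₀ near its infimum
  have hBne : B.Nonempty := by
    rcases Set.eq_empty_or_nonempty B with h | h
    · exfalso; rw [hmdef, h] at hmpos; simp at hmpos
    · exact h
  have hBbdd : BddBelow B := BddBelow.mono hBsubI bddBelow_Icc
  set u : ℝ := sInf B with hudef
  have hδ : 0 < m - 2 * τ / k₀ := by linarith
  obtain ⟨t₀, ht₀B, ht₀lt⟩ := Real.lt_sInf_add_pos hBne hδ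
  have hut₀ : u ≤ t₀ := csInf_le hBbdd ht₀B
  have ht₀S : t₀ ∈ S₁ := hAsub (hBsubA ht₀B)
  have ht₀T : t₀ + τ ≤ T := by
    have := (hBsubA ht₀B).2.2
    linarith
  have ht₀0 : 0 ≤ t₀ := (hsub ht₀S).1
  -- the good set inside the window
  set E : Set ℝ := B ∩ Set.Ici t₀ with hEdef
  have hEmeas : MeasurableSet E := hBmeas.inter measurableSet_Ici
  have hEsubB : E ⊆ B := Set.inter_subset_left
  have hEsubW : E ⊆ Set.Icc t₀ (t₀ + τ) := by
    intro x hx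
    refine ⟨hx.2, ?_⟩
    have hxI : x ≤ ((j : ℝ) + 1) * ℓ := (hBsubI hx.1).2
    have ht₀I : (j : ℝ) * ℓ ≤ t₀ := (hBsubI ht₀B).1
    have : x ≤ t₀ + ℓ := by nlinarith
    linarith
  have hEvol : 2 * τ / k₀ ≤ (volume E).toReal := by
    have hcov : B ⊆ E ∪ Set.Ico u t₀ := by
      intro x hx
      rcases le_or_gt t₀ x with h | h
      · exact Or.inl ⟨hx, h⟩
      · exact Or.inr ⟨csInf_le hBbdd hx, h⟩
    have h1 : volume B ≤ volume E + ENNReal.ofReal (t₀ - u) := by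
      calc volume B ≤ volume (E ∪ Set.Ico u t₀) := measure_mono hcov
        _ ≤ volume E + volume (Set.Ico u t₀) := measure_union_le _ _
        _ = volume E + ENNReal.ofReal (t₀ - u) := by rw [Real.volume_Ico]
    have hEfin : volume E ≠ ⊤ := hfin E (hEsubB.trans hBsubT)
    have h2 : m ≤ (volume E).toReal + (t₀ - u) := by
      have hne : volume E + ENNReal.ofReal (t₀ - u) ≠ ⊤ :=
        ENNReal.add_ne_top.2 ⟨hEfin, ENNReal.ofReal_ne_top⟩
      have := ENNReal.toReal_mono hne h1
      rwa [ENNReal.toReal_add hEfin ENNReal.ofReal_ne_top,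
        ENNReal.toReal_ofReal (by linarith)] at this
    have h3 : t₀ - u < m - 2 * τ / k₀ := by
      rw [← hudef] at ht₀lt; linarith
    linarith
  -- integral estimates
  have hWsub : Set.Icc t₀ (t₀ + τ) ⊆ Set.Icc 0 T := Set.Icc_subset_Icc ht₀0 ht₀T
  have hIW : IntegrableOn F (Set.Icc t₀ (t₀ + τ)) := hFint.mono_set hWsub
  have hIE : IntegrableOn F E := hFint.mono_set (hEsubB.trans hBsubT)
  have h1 : c * (volume E).toReal ≤ ∫ t in E, F t :=
    setIntegral_ge_of_const_le_real hEmeas (hfin E (hEsubB.trans hBsubT))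
      (fun x hx => hlow x (hAsub (hBsubA (hEsubB hx)))) hIE
  have h2 : ∫ t in E, F t ≤ ∫ t in Set.Icc t₀ (t₀ + τ), F t :=
    setIntegral_mono_set hIW (ae_of_all _ fun x => hFpos x)
      (HasSubset.Subset.eventuallyLE hEsubW)
  refine ⟨t₀, ht₀S, ht₀T, ?_⟩
  have h3 : c * (2 * τ / k₀) ≤ ∫ t in Set.Icc t₀ (t₀ + τ), F t := by
    calc c * (2 * τ / k₀) ≤ c * (volume E).toReal :=
          mul_le_mul_of_nonneg_left hEvol hc.le
      _ ≤ _ := le_trans h1 h2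
  have hkey : 2 * c / k₀ = (1 / τ) * (c * (2 * τ / k₀)) := by
    field_simp
  rw [hkey]
  exact mul_le_mul_of_nonneg_left h3 (by positivity)
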